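/- Assume p_{0,2} < κ < p_{0,1} and u_{0,2} < u_{0,1} satisfy (p_{0,1} − p_{0,2})(𝒯^i(p_{0,2}) − 1) = (u_{0,1} − u_{0,2})², and set λ̄₂ = −(u_{0,2} − u_{0,1})/(𝒯^i(p_{0,2}) − 1). Then there exist c > 0, δ > 0 and ε̄ > 0 such that for all 0 < ε < ε̄: (a) √(−1/𝒯_ε'(p)) ≤ λ̄₂ − c for every p ∈ (p_{0,2} − δ, p_{0,2} + δ) (the characteristic speeds on the free side of the interface are uniformly slower than the interface speed); (b) √(−1/𝒯_ε'(p)) ≥ λ̄₂ + c for every p ∈ (p_{0,1} − δ, p_{0,1} + δ) (the characteristic speeds on the congested side are uniformly faster than the interface speed). -/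

import Mathlib

open Set Filter MeasureTheory Topology

/-- The singular pressure law `𝒫_ε(τ) = κ τ^{-γᵢ} + ε (τ-1)^{-γ_c}`. -/
noncomputable def Pe (κ γi γc ε τ : ℝ) : ℝ := κ * τ ^ (-γi) + ε * (τ - 1) ^ (-γc)

lemma Pe_hasDerivAt (κ γi γc ε τ : ℝ) (hτ : 1 < τ) :
    HasDerivAt (Pe κ γi γc ε)
      (-(κ * γi * τ ^ (-γi - 1) + ε * γc * (τ - 1) ^ (-γc - 1))) τ := by
  have hτ0 : τ ≠ 0 := by linarith
  have hτ10 : τ - 1 ≠ 0 := by linarith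
  have h1 : HasDerivAt (fun x : ℝ => x ^ (-γi)) (-γi * τ ^ (-γi - 1)) τ :=
    Real.hasDerivAt_rpow_const (Or.inl hτ0)
  have h2 : HasDerivAt (fun x : ℝ => (x - 1) ^ (-γc)) (-γc * (τ - 1) ^ (-γc - 1)) τ := by
    have hb : HasDerivAt (fun x : ℝ => x - 1) 1 τ := (hasDerivAt_id τ).sub_const 1
    have hc : HasDerivAt (fun y : ℝ => y ^ (-γc)) (-γc * (τ - 1) ^ (-γc - 1)) (τ - 1) :=
      Real.hasDerivAt_rpow_const (Or.inl hτ10)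
    simpa [Function.comp_def] using hc.comp τ hb
  have := (h1.const_mul κ).add (h2.const_mul ε)
  exact this.congr_deriv (by ring)

lemma Pe_pos (κ γi γc ε τ : ℝ) (hκ : 0 < κ) (hε : 0 < ε) (hτ : 1 < τ) :
    0 < Pe κ γi γc ε τ := by
  have h1 : (0:ℝ) < τ ^ (-γi) := Real.rpow_pos_of_pos (by linarith) _
  have h2 : (0:ℝ) < (τ - 1) ^ (-γc) := Real.rpow_pos_of_pos (by linarith) _
  have := mul_pos hκ h1
  have := mul_pos hε h2
  unfold Pe; linarith

lemma Pe_strictAnti (κ γi γc ε : ℝ) (hκ : 0 < κ) (hγi : 1 < γi) (hγc : 1 < γc) (hε : 0 < ε) :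
    StrictAntiOn (Pe κ γi γc ε) (Ioi 1) := by
  apply strictAntiOn_of_deriv_neg (convex_Ioi 1)
  · intro x hx
    exact (Pe_hasDerivAt κ γi γc ε x hx).continuousAt.continuousWithinAt
  · intro x hx
    rw [interior_Ioi] at hx
    rw [(Pe_hasDerivAt κ γi γc ε x hx).deriv]
    have h1 : (0:ℝ) < x ^ (-γi - 1) := Real.rpow_pos_of_pos (by linarith [mem_Ioi.mp hx]) _
    have h2 : (0:ℝ) < (x - 1) ^ (-γc - 1) :=
      Real.rpow_pos_of_pos (by linarith [mem_Ioi.mp hx]) _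
    have := mul_pos (mul_pos hκ (by linarith : (0:ℝ) < γi)) h1
    have := mul_pos (mul_pos hε (by linarith : (0:ℝ) < γc)) h2
    linarith

/-- The key derivative computation for the inverse function `T ε`. -/
lemma T_deriv (κ γi γc : ℝ) (hκ : 0 < κ) (hγi : 1 < γi) (hγc : 1 < γc)
    (T : ℝ → ℝ → ℝ)
    (hT : ∀ ε > (0:ℝ), ∀ p > (0:ℝ), 1 < T ε p ∧ Pe κ γi γc ε (T ε p) = p)
    (ε : ℝ) (hε : 0 < ε) (p : ℝ) (hp : 0 < p) :
    -1 / deriv (T ε) p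
      = κ * γi * (T ε p) ^ (-γi - 1) + ε * γc * (T ε p - 1) ^ (-γc - 1) := by
  obtain ⟨hτ1, hτP⟩ := hT ε hε p hp
  set τ := T ε p with hτdef
  have hanti := Pe_strictAnti κ γi γc ε hκ hγi hγc hε
  -- continuity of T ε at p
  have hcont : ContinuousAt (T ε) p := by
    rw [Metric.continuousAt_iff]
    intro η hη
    set η' := min (η / 2) ((τ - 1) / 2) with hη'def
    have hη'pos : 0 < η' := lt_min (by linarith) (by linarith)
    have hη'le : η' ≤ (τ - 1) / 2 := min_le_right _ _
    have hl : (1:ℝ) < τ - η' := by linarith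
    have hr : (1:ℝ) < τ + η' := by linarith
    have hqm : Pe κ γi γc ε (τ + η') < p := by
      rw [← hτP]; exact hanti (mem_Ioi.mpr hτ1) (mem_Ioi.mpr hr) (by linarith)
    have hqp : p < Pe κ γi γc ε (τ - η') := by
      rw [← hτP]; exact hanti (mem_Ioi.mpr hl) (mem_Ioi.mpr hτ1) (by linarith)
    refine ⟨min (p - Pe κ γi γc ε (τ + η')) (Pe κ γi γc ε (τ - η') - p),
      lt_min (by linarith) (by linarith), ?_⟩
    intro q hq
    rw [Real.dist_eq] at hq
    have hq1 : Pe κ γi γc ε (τ + η') < q := by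
      have := abs_lt.mp (lt_of_lt_of_le hq (min_le_left _ _))
      linarith [this.1]
    have hq2 : q < Pe κ γi γc ε (τ - η') := by
      have := abs_lt.mp (lt_of_lt_of_le hq (min_le_right _ _))
      linarith [this.2]
    have hq0 : 0 < q := lt_trans (Pe_pos κ γi γc ε (τ + η') hκ hε hr) hq1
    obtain ⟨hTq1, hTqP⟩ := hT ε hε q hq0
    have hlo : τ - η' < T ε q := by
      by_contra hcon
      push_neg at hcon
      have : Pe κ γi γc ε (τ - η') ≤ Pe κ γi γc ε (T ε q) :=
        hanti.antitoneOn (mem_Ioi.mpr hTq1) (mem_Ioi.mpr hl) hcon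
      rw [hTqP] at this; linarith
    have hhi : T ε q < τ + η' := by
      by_contra hcon
      push_neg at hcon
      have : Pe κ γi γc ε (T ε q) ≤ Pe κ γi γc ε (τ + η') :=
        hanti.antitoneOn (mem_Ioi.mpr hr) (mem_Ioi.mpr hTq1) hcon
      rw [hTqP] at this; linarith
    rw [Real.dist_eq]
    have : |T ε q - τ| < η' := abs_lt.mpr ⟨by linarith, by linarith⟩
    calc |T ε q - τ| < η' := this
      _ ≤ η / 2 := min_le_left _ _
      _ < η := by linarith
  -- derivative of Pe at τ, nonzero
  set D := -(κ * γi * τ ^ (-γi - 1) + ε * γc * (τ - 1) ^ (-γc - 1)) with hDdef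
  have hPe : HasDerivAt (Pe κ γi γc ε) D τ := Pe_hasDerivAt κ γi γc ε τ hτ1
  have hDneg : D < 0 := by
    have h1 : (0:ℝ) < τ ^ (-γi - 1) := Real.rpow_pos_of_pos (by linarith) _
    have h2 : (0:ℝ) < (τ - 1) ^ (-γc - 1) := Real.rpow_pos_of_pos (by linarith) _
    have := mul_pos (mul_pos hκ (by linarith : (0:ℝ) < γi)) h1
    have := mul_pos (mul_pos hε (by linarith : (0:ℝ) < γc)) h2
    rw [hDdef]; linarith
  have hD0 : D ≠ 0 := ne_of_lt hDneg
  have hfg : ∀ᶠ y in 𝓝 p, Pe κ γi γc ε (T ε y) = y := by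
    filter_upwards [Ioi_mem_nhds hp] with y hy
    exact (hT ε hε y (mem_Ioi.mp hy)).2
  have hinv : HasDerivAt (T ε) D⁻¹ p :=
    HasDerivAt.of_local_left_inverse hcont hPe hD0 hfg
  rw [hinv.deriv]
  rw [div_inv_eq_mul, hDdef]
  ring

/-- Lower bound `(κ/p)^(1/γi) < T ε p`. -/
lemma T_lower (κ γi γc : ℝ) (hκ : 0 < κ) (hγi : 1 < γi) (hγc : 1 < γc)
    (T : ℝ → ℝ → ℝ)
    (hT : ∀ ε > (0:ℝ), ∀ p > (0:ℝ), 1 < T ε p ∧ Pe κ γi γc ε (T ε p) = p)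
    (ε : ℝ) (hε : 0 < ε) (p : ℝ) (hp : 0 < p) :
    (κ / p) ^ (1 / γi) < T ε p := by
  obtain ⟨hτ1, hτP⟩ := hT ε hε p hp
  set τ := T ε p with hτdef
  have hτ0 : (0:ℝ) < τ := by linarith
  have h2 : (0:ℝ) < (τ - 1) ^ (-γc) := Real.rpow_pos_of_pos (by linarith) _
  have hlt : κ * τ ^ (-γi) < p := by
    have := mul_pos hε h2
    unfold Pe at hτP; linarith
  have hτγ : (0:ℝ) < τ ^ γi := Real.rpow_pos_of_pos hτ0 _
  have hmul : τ ^ (-γi) * τ ^ γi = 1 := by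
    rw [← Real.rpow_add hτ0]; simp
  have hklt : κ / p < τ ^ γi := by
    rw [div_lt_iff₀ hp]
    calc κ = κ * (τ ^ (-γi) * τ ^ γi) := by rw [hmul]; ring
      _ = (κ * τ ^ (-γi)) * τ ^ γi := by ring
      _ < p * τ ^ γi := by exact mul_lt_mul_of_pos_right hlt hτγ
      _ = τ ^ γi * p := by ring
  rw [one_div]
  rw [Real.rpow_inv_lt_iff_of_pos (by positivity) hτ0.le (by linarith)]
  exact hklt

set_option maxHeartbeats 1000000 in
/-- Uniform separation of characteristic speeds from the interface speed:
uniformly for `ε` small. -/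
theorem stmt12 (κ γi γc p01 p02 u01 u02 : ℝ)
    (hκ : 0 < κ) (hγi : 1 < γi) (hγc : 1 < γc)
    (hp02 : 0 < p02) (h1 : p02 < κ) (h2 : κ < p01) (hu : u02 < u01)
    (hRH : (p01 - p02) * ((κ / p02) ^ (1 / γi) - 1) = (u01 - u02) ^ 2)
    (lam2 : ℝ) (hlam2 : lam2 = -(u02 - u01) / ((κ / p02) ^ (1 / γi) - 1))
    (T : ℝ → ℝ → ℝ)
    (hT : ∀ ε > (0:ℝ), ∀ p > (0:ℝ), 1 < T ε p ∧ Pe κ γi γc ε (T ε p) = p) :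
    ∃ c δ εb : ℝ, 0 < c ∧ 0 < δ ∧ 0 < εb ∧
      ∀ ε, 0 < ε → ε < εb →
        (∀ p ∈ Ioo (p02 - δ) (p02 + δ),
          Real.sqrt (-1 / deriv (T ε) p) ≤ lam2 - c) ∧
        (∀ p ∈ Ioo (p01 - δ) (p01 + δ),
          lam2 + c ≤ Real.sqrt (-1 / deriv (T ε) p)) := by
  have hγi0 : (0:ℝ) < γi := by linarith
  have hγc0 : (0:ℝ) < γc := by linarith
  set a := (κ / p02) ^ (1 / γi) with hadef
  have hka : 1 < κ / p02 := (one_lt_div hp02).mpr h1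
  have ha1 : 1 < a := by
    rw [hadef, Real.one_lt_rpow_iff_of_pos (by positivity)]
    exact Or.inl ⟨hka, by positivity⟩
  have ha0 : (0:ℝ) < a := by linarith
  have haγ : a ^ γi = κ / p02 := by
    rw [hadef, one_div]
    exact Real.rpow_inv_rpow (by positivity) (ne_of_gt hγi0)
  -- lam2 facts
  have hl : lam2 = (u01 - u02) / (a - 1) := by rw [hlam2]; ring_nf
  have hlam2pos : 0 < lam2 := by
    rw [hl]; exact div_pos (by linarith) (by linarith)
  have hlam2sq : lam2 ^ 2 = (p01 - p02) / (a - 1) := by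
    have ha1' : a - 1 ≠ 0 := by intro hcon; rw [sub_eq_zero] at hcon; rw [← hcon] at ha1; linarith
    rw [hl, div_pow, ← hRH, div_eq_div_iff (by positivity) ha1']
    ring
  -- Bernoulli
  have hbern : 1 + γi * (a - 1) ≤ a ^ γi := by
    have hb := one_add_mul_self_le_rpow_one_add (s := a - 1) (by linarith) hγi.le
    have : (1:ℝ) + (a - 1) = a := by ring
    rwa [this] at hb
  -- key strict inequality
  have hapow : a ^ (-γi - 1) = p02 / κ / a := by
    rw [show -γi - 1 = -γi + (-1) by ring, Real.rpow_add ha0, Real.rpow_neg_one]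
    rw [Real.rpow_neg ha0.le, haγ, inv_div]
    ring
  have hX : κ - p02 = p02 * (a ^ γi - 1) := by
    rw [haγ]; field_simp
  have hA0 : κ * γi * a ^ (-γi - 1) < lam2 ^ 2 := by
    rw [hapow, hlam2sq]
    have heq : κ * γi * (p02 / κ / a) = γi * p02 / a := by field_simp
    rw [heq, div_lt_div_iff₀ ha0 (by linarith : (0:ℝ) < a - 1)]
    -- goal : γi * p02 * (a - 1) < (p01 - p02) * a
    have h0 : 0 ≤ a ^ γi - 1 := by linarith
    have h1 : a ^ γi - 1 ≤ (a ^ γi - 1) * a := le_mul_of_one_le_right h0 ha1.le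
    have e1 : γi * (a - 1) ≤ (a ^ γi - 1) * a := by linarith
    have e2 : p02 * (γi * (a - 1)) ≤ p02 * ((a ^ γi - 1) * a) :=
      mul_le_mul_of_nonneg_left e1 hp02.le
    have e3 : p02 * ((a ^ γi - 1) * a) = (κ - p02) * a := by rw [hX]; ring
    have e4 : (κ - p02) * a < (p01 - p02) * a :=
      mul_lt_mul_of_pos_right (by linarith) ha0
    linarith
  set A0 := κ * γi * a ^ (-γi - 1) with hA0def
  have hA0pos : 0 < A0 := by
    have := Real.rpow_pos_of_pos ha0 (-γi - 1); positivity
  set M := (A0 + lam2 ^ 2) / 2 with hMdef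
  have hAM : A0 < M := by rw [hMdef]; linarith
  have hMl : M < lam2 ^ 2 := by rw [hMdef]; linarith
  have hMpos : 0 < M := by positivity
  -- continuity in p of the limit speed bound
  set h : ℝ → ℝ := fun q => κ * γi * ((κ / q) ^ (1 / γi)) ^ (-γi - 1) with hhdef
  have hh : ContinuousAt h p02 := by
    have hc1 : ContinuousAt (fun q : ℝ => κ / q) p02 :=
      continuousAt_const.div continuousAt_id hp02.ne'
    have hc2 : ContinuousAt (fun q : ℝ => (κ / q) ^ (1 / γi)) p02 :=
      hc1.rpow_const (Or.inl (by positivity))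
    have hc3 : ContinuousAt (fun q : ℝ => ((κ / q) ^ (1 / γi)) ^ (-γi - 1)) p02 :=
      hc2.rpow_const (Or.inl (by positivity))
    exact continuousAt_const.mul hc3
  have hhp02 : h p02 = A0 := by simp only [hhdef, hA0def, hadef]
  have hev : ∀ᶠ q in 𝓝 p02, h q < M := by
    have : Iio M ∈ 𝓝 (h p02) := Iio_mem_nhds (by rw [hhp02]; exact hAM)
    exact hh this
  obtain ⟨δ0, hδ0, hball⟩ := Metric.eventually_nhds_iff.mp hev
  -- choose δ
  set δ := min (min (δ0 / 2) (p02 / 2)) (min ((κ - p02) / 2) ((p01 - κ) / 2)) with hδdef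
  have hδpos : 0 < δ := by
    apply lt_min (lt_min (by linarith) (by linarith)) (lt_min (by linarith) (by linarith))
  have hδ1 : δ ≤ δ0 / 2 := le_trans (min_le_left _ _) (min_le_left _ _)
  have hδ2 : δ ≤ p02 / 2 := le_trans (min_le_left _ _) (min_le_right _ _)
  have hδ3 : δ ≤ (κ - p02) / 2 := le_trans (min_le_right _ _) (min_le_left _ _)
  have hδ4 : δ ≤ (p01 - κ) / 2 := le_trans (min_le_right _ _) (min_le_right _ _)
  -- uniform bounds on the free side
  set aδ := (κ / (p02 + δ)) ^ (1 / γi) with haδdef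
  have haδ1 : 1 < aδ := by
    rw [haδdef, Real.one_lt_rpow_iff_of_pos (by positivity)]
    exact Or.inl ⟨(one_lt_div (by linarith)).mpr (by linarith), by positivity⟩
  set C := γc * (aδ - 1) ^ (-γc - 1) with hCdef
  have hCpos : 0 < C := by
    have := Real.rpow_pos_of_pos (by linarith : (0:ℝ) < aδ - 1) (-γc - 1); positivity
  set M2 := (M + lam2 ^ 2) / 2 with hM2def
  have hM2a : M < M2 := by rw [hM2def]; linarith
  have hM2b : M2 < lam2 ^ 2 := by rw [hM2def]; linarith
  have hM2pos : 0 < M2 := by positivity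
  set c := lam2 - Real.sqrt M2 with hcdef
  have hcpos : 0 < c := by
    rw [hcdef, sub_pos]
    exact (Real.sqrt_lt' hlam2pos).mpr hM2b
  set m := (p01 - κ) / 2 with hmdef
  have hmpos : 0 < m := by rw [hmdef]; linarith
  have hlcpos : 0 < lam2 + c := by linarith
  set ε2 := m * (γc * m / (lam2 + c) ^ 2) ^ γc with hε2def
  have hε2pos : 0 < ε2 := by
    have := Real.rpow_pos_of_pos (by positivity : (0:ℝ) < γc * m / (lam2 + c) ^ 2) γc
    positivity
  set ε1 := (M2 - M) / C with hε1def
  have hε1pos : 0 < ε1 := by rw [hε1def]; exact div_pos (by linarith) hCpos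
  refine ⟨c, δ, min ε1 ε2, hcpos, hδpos, lt_min hε1pos hε2pos, ?_⟩
  intro ε hε hεlt
  have hεlt1 : ε < ε1 := lt_of_lt_of_le hεlt (min_le_left _ _)
  have hεlt2 : ε < ε2 := lt_of_lt_of_le hεlt (min_le_right _ _)
  constructor
  · -- part (a)
    rintro p ⟨hpl, hpr⟩
    have hp0 : 0 < p := by linarith
    obtain ⟨hτ1, hτP⟩ := hT ε hε p hp0
    rw [T_deriv κ γi γc hκ hγi hγc T hT ε hε p hp0]
    set τ := T ε p with hτdef
    have hτ0 : (0:ℝ) < τ := by linarith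
    have hb := T_lower κ γi γc hκ hγi hγc T hT ε hε p hp0
    rw [← hτdef] at hb
    set b := (κ / p) ^ (1 / γi) with hbdef
    have hbpos : (0:ℝ) < b := by rw [hbdef]; positivity
    -- term 1 bound
    have ht1 : κ * γi * τ ^ (-γi - 1) < M := by
      have h1 : τ ^ (-γi - 1) < b ^ (-γi - 1) :=
        Real.rpow_lt_rpow_of_neg hbpos hb (by linarith)
      have h2 : h p < M := by
        apply hball
        rw [Real.dist_eq, abs_lt]
        constructor <;> linarith
      have h3 : κ * γi * τ ^ (-γi - 1) < κ * γi * b ^ (-γi - 1) := by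
        have : (0:ℝ) < κ * γi := by positivity
        exact mul_lt_mul_of_pos_left h1 this
      have h2b : κ * γi * b ^ (-γi - 1) < M := by
        have hhp : h p = κ * γi * b ^ (-γi - 1) := by simp only [hhdef, hbdef]
        rwa [hhp] at h2
      linarith
    -- term 2 bound
    have haδb : aδ < b := by
      rw [haδdef, hbdef]
      apply Real.rpow_lt_rpow (by positivity) _ (by positivity)
      exact div_lt_div_of_pos_left hκ hp0 (by linarith)
    have haδτ : aδ < τ := lt_trans haδb hb
    have ht2 : ε * γc * (τ - 1) ^ (-γc - 1) < M2 - M := by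
      have h1 : (τ - 1) ^ (-γc - 1) < (aδ - 1) ^ (-γc - 1) :=
        Real.rpow_lt_rpow_of_neg (by linarith) (by linarith) (by linarith)
      have h2 : ε * γc * (τ - 1) ^ (-γc - 1) < ε * C := by
        rw [hCdef]
        have : (0:ℝ) < ε * γc := by positivity
        calc ε * γc * (τ - 1) ^ (-γc - 1) < ε * γc * (aδ - 1) ^ (-γc - 1) :=
              mul_lt_mul_of_pos_left h1 this
          _ = ε * (γc * (aδ - 1) ^ (-γc - 1)) := by ring
      have h3 : ε * C < ε1 * C := mul_lt_mul_of_pos_right hεlt1 hCpos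
      have h4 : ε1 * C = M2 - M := by
        rw [hε1def]; exact div_mul_cancel₀ _ hCpos.ne'
      linarith
    have hsum : κ * γi * τ ^ (-γi - 1) + ε * γc * (τ - 1) ^ (-γc - 1) ≤ M2 := by linarith
    calc Real.sqrt (κ * γi * τ ^ (-γi - 1) + ε * γc * (τ - 1) ^ (-γc - 1))
        ≤ Real.sqrt M2 := Real.sqrt_le_sqrt hsum
      _ = lam2 - c := by rw [hcdef]; ring
  · -- part (b)
    rintro p ⟨hpl, hpr⟩
    have hpm : κ + m < p := by
      have : p01 - δ ≥ κ + m := by rw [hmdef]; linarith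
      linarith
    have hp0 : 0 < p := by linarith
    obtain ⟨hτ1, hτP⟩ := hT ε hε p hp0
    rw [T_deriv κ γi γc hκ hγi hγc T hT ε hε p hp0]
    set τ := T ε p with hτdef
    have hτ0 : (0:ℝ) < τ := by linarith
    set X := τ - 1 with hXdef
    have hXpos : 0 < X := by rw [hXdef]; linarith
    have hτlt1 : τ ^ (-γi) < 1 := Real.rpow_lt_one_of_one_lt_of_neg hτ1 (by linarith)
    have hXe : m < ε * X ^ (-γc) := by
      have : κ * τ ^ (-γi) + ε * (τ - 1) ^ (-γc) = p := hτP
      have hκτ : κ * τ ^ (-γi) < κ := mul_lt_of_lt_one_right hκ hτlt1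
      rw [hXdef]; linarith
    have hXc0 : (0:ℝ) < X ^ (-γc) := Real.rpow_pos_of_pos hXpos _
    have h2' : m / ε < X ^ (-γc) := (div_lt_iff₀ hε).mpr (by linarith [hXe])
    -- X⁻¹ lower bound
    have hXinv : (m / ε) ^ (1 / γc) < X⁻¹ := by
      have hYeq : (X ^ (-γc)) ^ (1 / γc) = X⁻¹ := by
        rw [Real.rpow_neg hXpos.le, ← Real.inv_rpow hXpos.le, one_div]
        exact Real.rpow_rpow_inv (by positivity) (ne_of_gt hγc0)
      calc (m / ε) ^ (1 / γc) < (X ^ (-γc)) ^ (1 / γc) :=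
            Real.rpow_lt_rpow (by positivity) h2' (by positivity)
        _ = X⁻¹ := hYeq
    -- lower bound for the ε-term
    have hkey : γc * m * (m / ε) ^ (1 / γc) < ε * γc * X ^ (-γc - 1) := by
      have hXsplit : X ^ (-γc - 1) = X ^ (-γc) * X⁻¹ := by
        rw [show -γc - 1 = -γc + (-1) by ring, Real.rpow_add hXpos, Real.rpow_neg_one]
      rw [hXsplit]
      have heq : ε * γc * (X ^ (-γc) * X⁻¹) = γc * ((ε * X ^ (-γc)) * X⁻¹) := by ring
      rw [heq]
      have hfac : m * (m / ε) ^ (1 / γc) < (ε * X ^ (-γc)) * X⁻¹ := by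
        apply mul_lt_mul'' hXe hXinv hmpos.le (by positivity)
      calc γc * m * (m / ε) ^ (1 / γc) = γc * (m * (m / ε) ^ (1 / γc)) := by ring
        _ < γc * ((ε * X ^ (-γc)) * X⁻¹) := mul_lt_mul_of_pos_left hfac hγc0
    -- (lam2+c)^2 ≤ γc * m * (m/ε)^(1/γc)
    have hfin : (lam2 + c) ^ 2 ≤ γc * m * (m / ε) ^ (1 / γc) := by
      have hme2 : m / ε2 = ((lam2 + c) ^ 2 / (γc * m)) ^ γc := by
        rw [hε2def, div_mul_eq_div_div, div_self hmpos.ne', one_div,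
          ← Real.inv_rpow (by positivity), inv_div]
      have hstep : (m / ε2) ^ (1 / γc) = (lam2 + c) ^ 2 / (γc * m) := by
        rw [hme2, one_div]
        exact Real.rpow_rpow_inv (by positivity) (ne_of_gt hγc0)
      have hmono : (m / ε2) ^ (1 / γc) ≤ (m / ε) ^ (1 / γc) := by
        apply Real.rpow_le_rpow (by positivity) _ (by positivity)
        apply div_le_div_of_nonneg_left hmpos.le hε hεlt2.le
      have : (lam2 + c) ^ 2 / (γc * m) ≤ (m / ε) ^ (1 / γc) := by
        rw [← hstep]; exact hmono
      calc (lam2 + c) ^ 2 = γc * m * ((lam2 + c) ^ 2 / (γc * m)) := by field_simp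
        _ ≤ γc * m * (m / ε) ^ (1 / γc) :=
            mul_le_mul_of_nonneg_left this (by positivity)
    have ht1pos : 0 ≤ κ * γi * τ ^ (-γi - 1) := by
      have := Real.rpow_pos_of_pos hτ0 (-γi - 1); positivity
    rw [Real.le_sqrt hlcpos.le]
    · exact hfin.trans (hkey.le.trans (le_add_of_nonneg_left ht1pos))
    · have hx1 := Real.rpow_pos_of_pos hXpos (-γc - 1)
      have hx2 := mul_pos (mul_pos hε hγc0) hx1
      linarith
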